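/- arXiv:2305.07160 — 4 statements merged into one kernel-verified Lean document; each statement's English description precedes it below -/
import Mathlib

section
/- Define D_I : SU₂ → [0,1] by D_I(B) = (1/π)·arccos(tr(B)/2), where tr(B) is real for B ∈ SU₂. Then for every X ∈ 𝔰𝔲₂, D_I(−exp(2πX)) equals the distance from ‖X‖ to the set of odd integers. -/
open Matrix

/-- The Killing norm `‖X‖ = √(−2 tr(X²))` on `𝔰𝔲₂`. -/
noncomputable def su2Norm (X : Matrix (Fin 2) (Fin 2) ℂ) : ℝ :=
  Real.sqrt (((-2 : ℂ) * (X * X).trace).re)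

lemma dist_odd_aux (r : ℝ) :
    (1 / Real.pi) * Real.arccos (-Real.cos (Real.pi * r))
      = sInf {d : ℝ | ∃ m : ℤ, Odd m ∧ d = |r - (m : ℝ)|} := by
  have hπ : (0:ℝ) < Real.pi := Real.pi_pos
  set n : ℤ := round ((r - 1) / 2) with hn
  set d : ℝ := |r - ((2 * n + 1 : ℤ) : ℝ)| with hd
  have hfac : ∀ k : ℤ, r - ((2 * k + 1 : ℤ) : ℝ) = 2 * ((r - 1) / 2 - k) := by
    intro k; push_cast; ring
  have hfac' : ∀ k : ℤ, |r - ((2 * k + 1 : ℤ) : ℝ)| = 2 * |(r - 1) / 2 - k| := by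
    intro k; rw [hfac k, abs_mul, abs_two]
  have hd1 : d ≤ 1 := by
    have h := abs_sub_round ((r - 1) / 2)
    rw [hd, hfac' n]; rw [hn]; linarith
  have hd0 : 0 ≤ d := abs_nonneg _
  have hkey : -Real.cos (Real.pi * r) = Real.cos (Real.pi * d) := by
    have e0 : Real.pi * d = |Real.pi * (r - ((2 * n + 1 : ℤ) : ℝ))| := by
      rw [hd, abs_mul, abs_of_nonneg hπ.le]
    have e1 : Real.pi * (r - ((2 * n + 1 : ℤ) : ℝ))
        = (Real.pi * r - Real.pi) - (n : ℝ) * (2 * Real.pi) := by push_cast; ring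
    rw [e0, Real.cos_abs, e1, Real.cos_sub_int_mul_two_pi, Real.cos_sub_pi]
  have hLHS : (1 / Real.pi) * Real.arccos (-Real.cos (Real.pi * r)) = d := by
    rw [hkey, Real.arccos_cos (by positivity) (by nlinarith)]
    field_simp
  rw [hLHS]
  have hmem : d ∈ {d : ℝ | ∃ m : ℤ, Odd m ∧ d = |r - (m : ℝ)|} := ⟨2 * n + 1, ⟨n, by ring⟩, rfl⟩
  have hlb : ∀ x ∈ {d : ℝ | ∃ m : ℤ, Odd m ∧ d = |r - (m : ℝ)|}, d ≤ x := by
    rintro x ⟨m, ⟨k, rfl⟩, rfl⟩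
    rw [hfac' k, hd, hfac' n, hn]
    have := round_le ((r - 1) / 2) k
    linarith
  exact le_antisymm (le_csInf ⟨d, hmem⟩ hlb)
    (csInf_le ⟨0, fun x hx => by rcases hx with ⟨m, _, rfl⟩; exact abs_nonneg _⟩ hmem)

lemma trace_exp_su2 (X : Matrix (Fin 2) (Fin 2) ℂ)
    (hXtr : X.trace = 0) (hXsk : Xᴴ = -X) :
    (NormedSpace.exp ((2 * Real.pi : ℝ) • X)).trace
      = ((2 * Real.cos (Real.pi * su2Norm X) : ℝ) : ℂ) := by
  letI : SeminormedRing (Matrix (Fin 2) (Fin 2) ℂ) := Matrix.linftyOpSemiNormedRing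
  letI : NormedRing (Matrix (Fin 2) (Fin 2) ℂ) := Matrix.linftyOpNormedRing
  letI : NormedAlgebra ℝ (Matrix (Fin 2) (Fin 2) ℂ) := Matrix.linftyOpNormedAlgebra
  have h11 : X 1 1 = -X 0 0 := by
    have := hXtr; rw [Matrix.trace_fin_two] at this; linear_combination this
  have ha : (starRingEnd ℂ) (X 0 0) = -X 0 0 := by
    have := congrFun (congrFun hXsk 0) 0
    simpa [Matrix.conjTranspose_apply] using this
  have hb : X 1 0 = -(starRingEnd ℂ) (X 0 1) := by
    have h := congrFun (congrFun hXsk 1) 0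
    simp [Matrix.conjTranspose_apply] at h
    linear_combination h
  have hare : (X 0 0).re = 0 := by
    have := congrArg Complex.re ha
    simp [Complex.conj_re] at this
    linarith
  obtain ⟨q, hq0, hμ, hqX⟩ : ∃ q : ℝ, 0 ≤ q ∧ (X 0 0 ^ 2 + X 0 1 * X 1 0 = -(q : ℂ))
      ∧ (q = 0 → X = 0) := by
    refine ⟨(X 0 0).im ^ 2 + Complex.normSq (X 0 1),
      add_nonneg (sq_nonneg _) (Complex.normSq_nonneg _), ?_, ?_⟩
    · rw [hb]
      simp only [Complex.ext_iff, Complex.add_re, Complex.add_im, pow_two, Complex.mul_re,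
        Complex.mul_im, Complex.neg_re, Complex.neg_im, Complex.conj_re, Complex.conj_im,
        Complex.normSq_apply, Complex.ofReal_add, Complex.ofReal_mul, Complex.ofReal_pow,
        Complex.ofReal_re, Complex.ofReal_im, hare]
      constructor <;> push_cast <;> ring
    · intro h0
      have him : (X 0 0).im = 0 ∧ Complex.normSq (X 0 1) = 0 := by
        constructor <;> nlinarith [Complex.normSq_nonneg (X 0 1), sq_nonneg (X 0 0).im]
      have hb0 : X 0 1 = 0 := Complex.normSq_eq_zero.mp him.2
      have ha0 : X 0 0 = 0 := by apply Complex.ext <;> simp [hare, him.1]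
      ext i j
      fin_cases i <;> fin_cases j <;> simp [ha0, hb0, h11, hb, Matrix.zero_apply]
  have hX2 : X = !![X 0 0, X 0 1; X 1 0, -X 0 0] := by
    nth_rewrite 1 [Matrix.eta_fin_two X]
    rw [h11]
  have hsq : X * X = (-(q : ℂ)) • (1 : Matrix (Fin 2) (Fin 2) ℂ) := by
    rw [hX2, Matrix.one_fin_two, Matrix.mul_fin_two]
    rw [show (-(q : ℂ)) • (!![1, 0; 0, 1] : Matrix (Fin 2) (Fin 2) ℂ)
        = !![-(q:ℂ), 0; 0, -(q:ℂ)] by simp]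
    ext i j
    fin_cases i <;> fin_cases j <;> simp <;>
      first
        | ring1
        | linear_combination hμ
  have htr2 : (X * X).trace = ((-2 * q : ℝ) : ℂ) := by
    rw [hsq, Matrix.trace_smul, Matrix.trace_one]
    simp [smul_eq_mul, Fintype.card_fin]
    push_cast
    ring
  have hnorm : su2Norm X = 2 * Real.sqrt q := by
    rw [su2Norm, htr2]
    have e : ((-2 : ℂ) * ((-2 * q : ℝ) : ℂ)) = ((4 * q : ℝ) : ℂ) := by push_cast; ring
    rw [e, Complex.ofReal_re, show (4 : ℝ) * q = 2 ^ 2 * q by ring,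
      Real.sqrt_mul (by positivity), Real.sqrt_sq (by norm_num)]
  rcases eq_or_lt_of_le (Real.sqrt_nonneg q) with hzero | hpos
  · -- q = 0, X = 0
    have hqz : q = 0 := by rw [← Real.sq_sqrt hq0, ← hzero]; norm_num
    have hX0 : X = 0 := hqX hqz
    have hsu : su2Norm X = 0 := by rw [hnorm, ← hzero]; ring
    have hz : ((2 * Real.pi : ℝ) • X) = 0 := by rw [hX0, smul_zero]
    rw [hz, NormedSpace.exp_zero, Matrix.trace_one, hsu]
    simp [Fintype.card_fin]
  · -- q > 0
    set θ : ℝ := 2 * Real.pi * Real.sqrt q with hθ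
    have hθpos : 0 < θ := by rw [hθ]; positivity
    have hθC : ((θ : ℝ) : ℂ) ≠ 0 := by exact_mod_cast hθpos.ne'
    set A : Matrix (Fin 2) (Fin 2) ℂ := (2 * Real.pi : ℝ) • X with hA
    have hAc : A = (((2 * Real.pi : ℝ) : ℂ)) • X := by
      rw [hA, ← algebraMap_smul ℂ (2 * Real.pi : ℝ) X, Complex.coe_algebraMap]
    have hqc : ((q : ℝ) : ℂ) = ((Real.sqrt q : ℝ) : ℂ) ^ 2 := by
      exact_mod_cast congrArg Complex.ofReal (Real.sq_sqrt hq0).symm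
    have hA2 : A * A = (-((θ : ℝ) : ℂ) ^ 2) • (1 : Matrix (Fin 2) (Fin 2) ℂ) := by
      rw [hAc, smul_mul_smul_comm, hsq, smul_smul]
      congr 1
      rw [hθ]
      push_cast
      linear_combination (-4 * (Real.pi : ℂ) ^ 2) * hqc
    set J : Matrix (Fin 2) (Fin 2) ℂ := ((θ : ℂ))⁻¹ • A with hJ
    have hJ2 : J * J = -1 := by
      rw [hJ, smul_mul_smul_comm, hA2, smul_smul]
      have e : (θ : ℂ)⁻¹ * (θ : ℂ)⁻¹ * -((θ : ℂ)) ^ 2 = -1 := by field_simp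
      rw [e]
      simp
    set φ : ℂ →ₐ[ℝ] Matrix (Fin 2) (Fin 2) ℂ := Complex.liftAux J hJ2 with hφ
    have hφc : Continuous φ := φ.toLinearMap.continuous_of_finiteDimensional
    have hφA : φ ((θ : ℝ) * Complex.I) = A := by
      rw [hφ, Complex.liftAux_apply]
      simp only [Complex.mul_re, Complex.mul_im, Complex.I_re, Complex.I_im,
        Complex.ofReal_re, Complex.ofReal_im, mul_zero, mul_one, zero_mul, sub_zero, zero_add,
        zero_sub, add_zero, map_zero]
      rw [hJ, ← algebraMap_smul ℂ θ (((θ : ℂ))⁻¹ • A), Complex.coe_algebraMap, smul_smul,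
        mul_inv_cancel₀ hθC, one_smul]
    have key : NormedSpace.exp A = φ (Complex.exp ((θ : ℝ) * Complex.I)) := by
      rw [Complex.exp_eq_exp_ℂ]
      rw [NormedSpace.map_exp φ hφc, hφA]
      rfl
    have htrA : A.trace = 0 := by rw [hA, Matrix.trace_smul, hXtr, smul_zero]
    have htrJ : J.trace = 0 := by rw [hJ, Matrix.trace_smul, htrA, smul_zero]
    have hθeq : θ = Real.pi * su2Norm X := by rw [hnorm, hθ]; ring
    rw [key, Complex.exp_mul_I, hφ, Complex.liftAux_apply, Matrix.trace_add,
      Matrix.trace_smul, htrJ, smul_zero, add_zero]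
    have hzre : (Complex.cos (θ : ℂ) + Complex.sin (θ : ℂ) * Complex.I).re = Real.cos θ := by
      simp [← Complex.ofReal_cos, ← Complex.ofReal_sin]
    rw [hzre, Matrix.algebraMap_eq_diagonal, Matrix.trace_diagonal]
    simp [Fin.sum_univ_two]
    rw [hθeq]
    push_cast
    ring

/-- With `D_I(B) = (1/π)·arccos(tr(B)/2)`, for every `X ∈ 𝔰𝔲₂` the quantity
`D_I(−exp(2πX))` equals the distance from `‖X‖` to the set of odd integers. -/
theorem D_I_e_eq_dist_odd (X : Matrix (Fin 2) (Fin 2) ℂ)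
    (hXtr : X.trace = 0) (hXsk : Xᴴ = -X) :
    (1 / Real.pi) *
        Real.arccos ((-NormedSpace.exp ((2 * Real.pi : ℝ) • X)).trace.re / 2)
      = sInf {d : ℝ | ∃ m : ℤ, Odd m ∧ d = |su2Norm X - (m : ℝ)|} := by
  have h := trace_exp_su2 X hXtr hXsk
  have harg : (-NormedSpace.exp ((2 * Real.pi : ℝ) • X)).trace.re / 2
      = -Real.cos (Real.pi * su2Norm X) := by
    rw [Matrix.trace_neg, h, Complex.neg_re, Complex.ofReal_re]
    ring
  rw [harg, dist_odd_aux (su2Norm X)]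
end

section
/- The commutator map c : SU₂ × SU₂ → SU₂ defined by c(M,N) = M N M⁻¹ N⁻¹ is surjective. -/
open Matrix

open ComplexConjugate in
/-- Entry structure of an `SU₂` matrix. -/
theorem SU2_entries {C : Matrix (Fin 2) (Fin 2) ℂ}
    (hC : C ∈ Matrix.specialUnitaryGroup (Fin 2) ℂ) :
    C 1 1 = conj (C 0 0) ∧ C 0 1 = -conj (C 1 0) ∧
      C 0 0 * conj (C 0 0) + C 1 0 * conj (C 1 0) = 1 := by
  obtain ⟨hU, hdet⟩ := Matrix.mem_specialUnitaryGroup_iff.mp hC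
  have h1 : star C * C = 1 := Matrix.mem_unitaryGroup_iff'.mp hU
  have hinv : C⁻¹ = star C := Matrix.inv_eq_left_inv h1
  have hadj : star C = C.adjugate := by
    rw [← hinv, Matrix.inv_def, hdet, Ring.inverse_one, one_smul]
  rw [Matrix.adjugate_fin_two] at hadj
  have h00 : conj (C 0 0) = C 1 1 := by
    have := congrFun (congrFun hadj 0) 0
    simpa [Matrix.conjTranspose_apply] using this
  have h01 : conj (C 1 0) = -C 0 1 := by
    have := congrFun (congrFun hadj 0) 1
    simpa [Matrix.conjTranspose_apply] using this
  have hd : C 0 0 * C 1 1 - C 0 1 * C 1 0 = 1 := by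
    rw [← Matrix.det_fin_two]; exact hdet
  refine ⟨h00.symm, by rw [h01]; ring, ?_⟩
  rw [h00, h01]; linear_combination hd

set_option maxHeartbeats 1000000 in
open ComplexConjugate in
/-- The algebraic core: explicit diagonalization of a generic `SU₂` matrix. -/
theorem SU2_diag_aux (a b w : ℂ) (n : ℝ)
    (habs : a * conj a + b * conj b = 1)
    (hw2 : w ^ 2 - (a + conj a) * w + 1 = 0)
    (hwc : w + conj w = a + conj a)
    (hn2 : ((n : ℂ)) ^ 2 = conj b * b + (a - w) * (conj a - conj w))
    (hn0 : (n : ℂ) ≠ 0) :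
    !![conj b / n, -(conj a - conj w) / n; (a - w) / n, b / n] *
      star !![conj b / n, -(conj a - conj w) / n; (a - w) / n, b / n] = 1 ∧
    (!![conj b / n, -(conj a - conj w) / n; (a - w) / n, b / n] :
        Matrix (Fin 2) (Fin 2) ℂ).det = 1 ∧
    !![a, -conj b; b, conj a] * !![conj b / n, -(conj a - conj w) / n; (a - w) / n, b / n] =
      !![conj b / n, -(conj a - conj w) / n; (a - w) / n, b / n] * !![w, 0; 0, conj w] := by
  have hw2' : (conj w) ^ 2 - (a + conj a) * conj w + 1 = 0 := by
    linear_combination hw2 + (conj w - w) * hwc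
  refine ⟨?_, ?_, ?_⟩
  · ext i j
    fin_cases i <;> fin_cases j <;>
      simp [Matrix.mul_apply, Fin.sum_univ_two, Matrix.conjTranspose_apply, map_div₀,
        Complex.conj_ofReal, map_sub, map_neg, Complex.conj_conj, Matrix.one_apply]
    all_goals try field_simp
    all_goals try ring1
    all_goals try ((try push_cast); linear_combination hn2)
    all_goals try ((try push_cast); linear_combination -hn2)
  · rw [Matrix.det_fin_two_of]
    field_simp
    first
      | ring1
      | ((try push_cast); linear_combination hn2)
      | ((try push_cast); linear_combination -hn2)
      | ((try push_cast); linear_combination 2 * hn2)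
      | ((try push_cast); linear_combination -2 * hn2)
  · rw [Matrix.mul_fin_two, Matrix.mul_fin_two]
    ext i j
    fin_cases i <;> fin_cases j <;> simp only [Matrix.cons_val', Matrix.cons_val_zero,
      Matrix.cons_val_one, Matrix.head_cons, Matrix.head_fin_const, Matrix.empty_val',
      Matrix.cons_val_fin_one, Matrix.of_apply, Fin.zero_eta, Fin.mk_one]
    all_goals try field_simp
    all_goals try ring1
    all_goals try ((try push_cast); linear_combination habs + hw2)
    all_goals try ((try push_cast); linear_combination -habs - hw2)
    all_goals try ((try push_cast); linear_combination habs + hw2')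
    all_goals try ((try push_cast); linear_combination -habs - hw2')

open ComplexConjugate in
/-- Every `SU₂` matrix is diagonalizable by an `SU₂` matrix, with unit eigenvalues
`w`, `conj w`. -/
theorem SU2_diag {C : Matrix (Fin 2) (Fin 2) ℂ}
    (hC : C ∈ Matrix.specialUnitaryGroup (Fin 2) ℂ) :
    ∃ (P : Matrix (Fin 2) (Fin 2) ℂ) (w : ℂ),
      P * star P = 1 ∧ P.det = 1 ∧ w * conj w = 1 ∧
      C * P = P * !![w, 0; 0, conj w] := by
  obtain ⟨h11, h01, habs⟩ := SU2_entries hC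
  obtain ⟨a, ha⟩ : ∃ a, C 0 0 = a := ⟨_, rfl⟩
  obtain ⟨b, hb⟩ : ∃ b, C 1 0 = b := ⟨_, rfl⟩
  rw [ha, hb] at habs
  rw [hb] at h01
  rw [ha] at h11
  have hCeq : C = !![a, -conj b; b, conj a] := by
    rw [Matrix.eta_fin_two C, h01, h11, ha, hb]
  -- find the eigenvalue
  have hnorm : Complex.normSq a + Complex.normSq b = 1 := by
    have : ((Complex.normSq a + Complex.normSq b : ℝ) : ℂ) = 1 := by
      push_cast
      rw [← Complex.mul_conj, ← Complex.mul_conj]; exact habs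
    exact_mod_cast this
  have hr2 : a.re ^ 2 ≤ 1 := by
    have h1 : a.re ^ 2 ≤ Complex.normSq a := by
      rw [Complex.normSq_apply]; nlinarith [sq_nonneg a.im]
    nlinarith [Complex.normSq_nonneg b]
  have hra : a + conj a = 2 * (a.re : ℂ) := by
    rw [Complex.add_conj]; push_cast; ring
  obtain ⟨w, hw1, hw2, hwc⟩ : ∃ w : ℂ, w * conj w = 1 ∧
      w ^ 2 - (a + conj a) * w + 1 = 0 ∧ w + conj w = a + conj a := by
    set r : ℝ := a.re with hr
    set s : ℝ := Real.sqrt (1 - r ^ 2) with hs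
    have hs2 : s ^ 2 = 1 - r ^ 2 := Real.sq_sqrt (by linarith)
    have hsC : (s : ℂ) ^ 2 = 1 - (r : ℂ) ^ 2 := by exact_mod_cast congrArg Complex.ofReal hs2
    have hconj : conj ((r : ℂ) + (s : ℂ) * Complex.I) = (r : ℂ) - (s : ℂ) * Complex.I := by
      simp [Complex.conj_ofReal, Complex.conj_I]
      ring
    refine ⟨(r : ℂ) + (s : ℂ) * Complex.I, ?_, ?_, ?_⟩
    · rw [hconj]
      linear_combination (-(s : ℂ) ^ 2) * Complex.I_sq + hsC
    · rw [hra]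
      linear_combination (s : ℂ) ^ 2 * Complex.I_sq - hsC
    · rw [hconj, hra]; ring
  by_cases hb0 : b = 0
  · refine ⟨1, a, by simp, by simp, ?_, ?_⟩
    · rw [hb0] at habs; linear_combination habs
    · rw [hCeq, hb0]
      simp
  · -- the normalization constant
    obtain ⟨n, hn0, hn2⟩ : ∃ n : ℝ, (n : ℂ) ≠ 0 ∧
        ((n : ℂ)) ^ 2 = conj b * b + (a - w) * (conj a - conj w) := by
      set nn : ℝ := Complex.normSq (conj b) + Complex.normSq (a - w) with hnn
      have hnnpos : 0 < nn := by
        have h1 : 0 < Complex.normSq (conj b) := by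
          rw [Complex.normSq_pos]; simpa using hb0
        have h2 : 0 ≤ Complex.normSq (a - w) := Complex.normSq_nonneg _
        rw [hnn]; linarith
      refine ⟨Real.sqrt nn, ?_, ?_⟩
      · exact_mod_cast Complex.ofReal_ne_zero.mpr (Real.sqrt_pos.mpr hnnpos).ne'
      · have h3 : (Real.sqrt nn : ℝ) ^ 2 = nn := Real.sq_sqrt hnnpos.le
        have h4 : ((nn : ℝ) : ℂ) = conj b * b + (a - w) * (conj a - conj w) := by
          rw [hnn]
          push_cast
          rw [← Complex.mul_conj, ← Complex.mul_conj]
          simp [map_sub, Complex.conj_conj]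
        rw [← h4]
        exact_mod_cast congrArg Complex.ofReal h3
    obtain ⟨hP1, hPdet, hCP⟩ := SU2_diag_aux a b w n habs hw2 hwc hn2 hn0
    exact ⟨_, w, hP1, hPdet, hw1, by rw [hCeq]; exact hCP⟩

open ComplexConjugate in
/-- The commutator map `c(M,N) = M N M⁻¹ N⁻¹` on `SU₂` is surjective. -/
theorem commutator_surjective_SU2 (C : Matrix (Fin 2) (Fin 2) ℂ)
    (hC : C ∈ Matrix.specialUnitaryGroup (Fin 2) ℂ) :
    ∃ M N : Matrix (Fin 2) (Fin 2) ℂ,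
      M ∈ Matrix.specialUnitaryGroup (Fin 2) ℂ ∧
      N ∈ Matrix.specialUnitaryGroup (Fin 2) ℂ ∧
      M * N * M⁻¹ * N⁻¹ = C := by
  obtain ⟨P, w, hP1, hPdet, hw1, hCP⟩ := SU2_diag hC
  have hP2 : star P * P = 1 := mul_eq_one_comm.mp hP1
  -- a unit square root z of w
  obtain ⟨z, hzw⟩ : ∃ z : ℂ, z ^ 2 = w := IsAlgClosed.exists_pow_nat_eq w zero_lt_two
  have hz1 : z * conj z = 1 := by
    have h1 : Complex.normSq w = 1 := by
      have := hw1; rw [Complex.mul_conj] at this; exact_mod_cast this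
    have h2 : Complex.normSq z ^ 2 = 1 := by
      rw [← map_pow, hzw, h1]
    have h3 : Complex.normSq z = 1 := by nlinarith [Complex.normSq_nonneg z]
    rw [Complex.mul_conj, h3]
    try exact Complex.ofReal_one
  have hzc : conj z * z = 1 := by rw [mul_comm]; exact hz1
  have hzz : z * z = w := by rw [← hzw]; ring
  have hzzc : conj z * conj z = conj w := by
    have h := congrArg (starRingEnd ℂ) hzz
    simpa using h
  obtain ⟨B, hB⟩ : ∃ B' : Matrix (Fin 2) (Fin 2) ℂ, B' = !![z, 0; 0, conj z] := ⟨_, rfl⟩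
  obtain ⟨B₀, hB₀⟩ : ∃ B' : Matrix (Fin 2) (Fin 2) ℂ, B' = !![0, -1; 1, 0] := ⟨_, rfl⟩
  have hBs : B * star B = 1 := by
    rw [hB]
    ext i j; fin_cases i <;> fin_cases j <;>
      simp [Matrix.mul_apply, Fin.sum_univ_two, Matrix.conjTranspose_apply,
        Matrix.one_apply, hz1, hzc]
  have hB₀s : B₀ * star B₀ = 1 := by
    rw [hB₀]
    ext i j; fin_cases i <;> fin_cases j <;>
      simp [Matrix.mul_apply, Fin.sum_univ_two, Matrix.conjTranspose_apply,
        Matrix.one_apply]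
  have hBdet : B.det = 1 := by
    rw [hB, Matrix.det_fin_two_of]; simpa using hz1
  have hB₀det : B₀.det = 1 := by
    rw [hB₀, Matrix.det_fin_two_of]; norm_num
  have hPdets : (star P).det = 1 := by
    rw [Matrix.star_eq_conjTranspose, Matrix.det_conjTranspose, hPdet]; simp
  have collapse : ∀ X Y : Matrix (Fin 2) (Fin 2) ℂ,
      (P * X * star P) * (P * Y * star P) = P * (X * Y) * star P := by
    intro X Y
    have h : (P * X * star P) * (P * Y * star P) = P * X * (star P * P) * (Y * star P) := by
      simp only [mul_assoc]
    rw [h, hP2, mul_one]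
    simp only [mul_assoc]
  have starM : ∀ X : Matrix (Fin 2) (Fin 2) ℂ,
      star (P * X * star P) = P * star X * star P := by
    intro X
    simp only [Matrix.star_mul, star_star, mul_assoc]
  have hmem : ∀ X : Matrix (Fin 2) (Fin 2) ℂ, X * star X = 1 → X.det = 1 →
      P * X * star P ∈ Matrix.specialUnitaryGroup (Fin 2) ℂ := by
    intro X hX hXdet
    refine Matrix.mem_specialUnitaryGroup_iff.mpr ⟨Matrix.mem_unitaryGroup_iff.mpr ?_, ?_⟩
    · rw [starM X, collapse, hX, mul_one, hP1]
    · rw [Matrix.det_mul, Matrix.det_mul, hPdet, hXdet, hPdets]; ring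
  have hinv : ∀ X : Matrix (Fin 2) (Fin 2) ℂ, X * star X = 1 →
      (P * X * star P)⁻¹ = P * star X * star P := by
    intro X hX
    apply Matrix.inv_eq_right_inv
    rw [collapse, hX, mul_one, hP1]
  refine ⟨P * B * star P, P * B₀ * star P, hmem B hBs hBdet, hmem B₀ hB₀s hB₀det, ?_⟩
  rw [hinv B hBs, hinv B₀ hB₀s, collapse, collapse, collapse]
  have hBstar : star B = !![conj z, 0; 0, z] := by
    rw [hB]
    ext i j; fin_cases i <;> fin_cases j <;> simp [Matrix.conjTranspose_apply]
  have hB₀star : star B₀ = !![0, 1; -1, 0] := by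
    rw [hB₀]
    ext i j; fin_cases i <;> fin_cases j <;> simp [Matrix.conjTranspose_apply]
  have hcore : B * B₀ * star B * star B₀ = !![w, 0; 0, conj w] := by
    rw [hBstar, hB₀star, hB, hB₀, Matrix.mul_fin_two, Matrix.mul_fin_two, Matrix.mul_fin_two]
    ext i j; fin_cases i <;> fin_cases j <;> simp
    all_goals first
      | rfl
      | linear_combination hzz
      | linear_combination hzzc
      | linear_combination -hzz
      | linear_combination -hzzc
  rw [hcore, ← hCP]
  rw [mul_assoc, hP1, mul_one]
end

section
/- Let V_odd ⊂ {0,1}ⁿ be the set of vertices of the unit n-cube whose coordinates sum to an odd integer, and let DC_n be the convex hull of the even vertices (those whose coordinate sum is even). Then DC_n equals the set of points x ∈ [0,1]ⁿ whose ℓ¹-distance to V_odd is at least 1. -/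
open Finset

namespace DemicubeAux

variable {n : ℕ}

/-- The set of even vertices of the unit cube. -/
def Ev (n : ℕ) : Set (Fin n → ℝ) :=
  {v | (∀ i, v i = 0 ∨ v i = 1) ∧ ∃ k : ℤ, ∑ i, v i = 2 * (k : ℝ)}

/-- The candidate polytope. -/
def P (n : ℕ) : Set (Fin n → ℝ) :=
  {x | (∀ i, x i ∈ Set.Icc (0 : ℝ) 1) ∧
    ∀ v : Fin n → ℝ,
      ((∀ i, v i = 0 ∨ v i = 1) ∧ ∃ k : ℤ, ∑ i, v i = 2 * (k : ℝ) + 1) →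
      1 ≤ ∑ i, |x i - v i|}

/-- `|t - v| = t*(1-v) + (1-t)*v` for `t ∈ [0,1]`, `v ∈ {0,1}`. -/
lemma abs01 {t v : ℝ} (ht0 : 0 ≤ t) (ht1 : t ≤ 1) (hv : v = 0 ∨ v = 1) :
    |t - v| = t * (1 - v) + (1 - t) * v := by
  rcases hv with h | h <;> subst h
  · simp [abs_of_nonneg ht0]
  · rw [abs_of_nonpos (by linarith)]; ring

lemma convex_P : Convex ℝ (P n) := by
  intro x hx y hy a b ha hb hab
  obtain ⟨hxc, hxv⟩ := hx
  obtain ⟨hyc, hyv⟩ := hy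
  have hcube : ∀ i, (a • x + b • y) i ∈ Set.Icc (0 : ℝ) 1 := by
    intro i
    have h1 := hxc i; have h2 := hyc i
    simp only [Set.mem_Icc] at h1 h2 ⊢
    simp only [Pi.add_apply, Pi.smul_apply, smul_eq_mul]
    constructor
    · nlinarith [h1.1, h2.1]
    · nlinarith [h1.2, h2.2]
  refine ⟨hcube, fun v hv => ?_⟩
  have key : ∀ i, |(a • x + b • y) i - v i| = a * |x i - v i| + b * |y i - v i| := by
    intro i
    have h1 := hxc i; have h2 := hyc i; have h3 := hcube i
    simp only [Set.mem_Icc] at h1 h2 h3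
    rw [abs01 h3.1 h3.2 (hv.1 i), abs01 h1.1 h1.2 (hv.1 i), abs01 h2.1 h2.2 (hv.1 i)]
    simp only [Pi.add_apply, Pi.smul_apply, smul_eq_mul]
    linear_combination (- v i) * hab
  calc (1 : ℝ) = a * 1 + b * 1 := by linarith
    _ ≤ a * (∑ i, |x i - v i|) + b * (∑ i, |y i - v i|) := by
        have h1 := mul_le_mul_of_nonneg_left (hxv v hv) ha
        have h2 := mul_le_mul_of_nonneg_left (hyv v hv) hb
        linarith
    _ = ∑ i, |(a • x + b • y) i - v i| := by
        rw [Finset.mul_sum, Finset.mul_sum, ← Finset.sum_add_distrib]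
        exact Finset.sum_congr rfl fun i _ => (key i).symm

lemma Ev_subset_P : Ev n ⊆ P n := by
  rintro e ⟨he01, k, hk⟩
  refine ⟨fun i => ?_, fun v ⟨hv01, m, hm⟩ => ?_⟩
  · rcases he01 i with h | h <;> simp [h]
  · have habs : |∑ i, (e i - v i)| ≤ ∑ i, |e i - v i| := Finset.abs_sum_le_sum_abs _ _
    have hsum : ∑ i, (e i - v i) = 2 * ((k - m : ℤ) : ℝ) - 1 := by
      rw [Finset.sum_sub_distrib, hk, hm]; push_cast; ring
    have h1 : (1 : ℝ) ≤ |2 * ((k - m : ℤ) : ℝ) - 1| := by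
      have : (2 * ((k - m : ℤ) : ℝ) - 1) = ((2 * (k - m) - 1 : ℤ) : ℝ) := by push_cast; ring
      rw [this, ← Int.cast_abs]
      have : 1 ≤ |2 * (k - m) - 1| := Int.one_le_abs (by omega)
      exact_mod_cast this
    calc (1 : ℝ) ≤ |2 * ((k - m : ℤ) : ℝ) - 1| := h1
      _ = |∑ i, (e i - v i)| := by rw [hsum]
      _ ≤ ∑ i, |e i - v i| := habs

lemma isClosed_P : IsClosed (P n) := by
  have : P n = {x : Fin n → ℝ | ∀ i, x i ∈ Set.Icc (0 : ℝ) 1} ∩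
      ⋂ v ∈ {v : Fin n → ℝ | (∀ i, v i = 0 ∨ v i = 1) ∧
          ∃ k : ℤ, ∑ i, v i = 2 * (k : ℝ) + 1},
        {x : Fin n → ℝ | 1 ≤ ∑ i, |x i - v i|} := by
    ext x
    simp only [P, Set.mem_setOf_eq, Set.mem_inter_iff, Set.mem_iInter]
  rw [this]
  refine IsClosed.inter ?_ ?_
  · have : {x : Fin n → ℝ | ∀ i, x i ∈ Set.Icc (0 : ℝ) 1} =
        Set.pi Set.univ (fun _ => Set.Icc (0 : ℝ) 1) := by
      ext x; simp only [Set.mem_pi, Set.mem_univ, forall_true_left, Set.mem_setOf_eq]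
    rw [this]
    exact isClosed_set_pi fun i _ => isClosed_Icc
  · refine isClosed_biInter fun v _ => ?_
    exact isClosed_le continuous_const (by fun_prop)

lemma isCompact_P : IsCompact (P n) := by
  have hcube : IsCompact (Set.pi Set.univ (fun _ : Fin n => Set.Icc (0 : ℝ) 1)) :=
    isCompact_univ_pi fun _ => isCompact_Icc
  refine hcube.of_isClosed_subset isClosed_P ?_
  intro x hx
  simp only [Set.mem_pi, Set.mem_univ, forall_true_left]
  exact fun i => hx.1 i

def vtx (s : Finset (Fin n)) : Fin n → ℝ := fun i => if i ∈ s then 1 else 0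

noncomputable def g (x : Fin n → ℝ) (s : Finset (Fin n)) : ℝ := ∑ i, |x i - vtx s i|

lemma vtx01 (s : Finset (Fin n)) (i : Fin n) : vtx s i = 0 ∨ vtx s i = 1 := by
  unfold vtx; split <;> simp

lemma sum_vtx (s : Finset (Fin n)) : ∑ i, vtx s i = (s.card : ℝ) := by
  unfold vtx
  rw [Finset.sum_ite_mem, Finset.univ_inter, Finset.sum_const, nsmul_eq_mul, mul_one]

lemma vtx_odd (s : Finset (Fin n)) (h : Odd s.card) :
    (∀ i, vtx s i = 0 ∨ vtx s i = 1) ∧ ∃ k : ℤ, ∑ i, vtx s i = 2 * (k : ℝ) + 1 := by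
  obtain ⟨m, hm⟩ := h
  exact ⟨vtx01 s, ⟨m, by rw [sum_vtx, hm]; push_cast; ring⟩⟩

lemma exists_rep (v : Fin n → ℝ) (hv : ∀ i, v i = 0 ∨ v i = 1)
    (hodd : ∃ k : ℤ, ∑ i, v i = 2 * (k : ℝ) + 1) :
    ∃ s : Finset (Fin n), v = vtx s ∧ Odd s.card := by
  classical
  refine ⟨Finset.univ.filter (fun i => v i = 1), ?_, ?_⟩
  · funext i
    rcases hv i with h | h <;> simp [vtx, h]
  · obtain ⟨k, hk⟩ := hodd
    have hsum : ∑ i, v i = ((Finset.univ.filter (fun i => v i = 1)).card : ℝ) := by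
      have h1 : ∀ i, v i = if v i = 1 then (1 : ℝ) else 0 := by
        intro i; rcases hv i with h | h <;> simp [h]
      calc ∑ i, v i = ∑ i, if v i = 1 then (1 : ℝ) else 0 :=
            Finset.sum_congr rfl fun i _ => h1 i
        _ = _ := by rw [Finset.sum_boole]
    rw [hsum] at hk
    have : ((Finset.univ.filter (fun i => v i = 1)).card : ℤ) = 2 * k + 1 := by
      exact_mod_cast hk
    rw [Nat.odd_iff]; omega

lemma sum_abs_add (x d v : Fin n → ℝ) (hv : ∀ i, v i = 0 ∨ v i = 1)
    (hx : ∀ i, x i ∈ Set.Icc (0 : ℝ) 1) (hxd : ∀ i, x i + d i ∈ Set.Icc (0 : ℝ) 1) :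
    ∑ i, |x i + d i - v i| = (∑ i, |x i - v i|) + ∑ i, d i * (1 - 2 * v i) := by
  rw [← Finset.sum_add_distrib]
  refine Finset.sum_congr rfl fun i _ => ?_
  have h1 := hx i; have h2 := hxd i
  simp only [Set.mem_Icc] at h1 h2
  rw [abs01 h2.1 h2.2 (hv i), abs01 h1.1 h1.2 (hv i)]
  ring

lemma extremePoints_subset_Ev : (P n).extremePoints ℝ ⊆ Ev n := by
  classical
  rintro x hx
  rw [mem_extremePoints] at hx
  obtain ⟨hxP, hext⟩ := hx
  have hcube := hxP.1
  have key : ∀ d : Fin n → ℝ, x + d ∈ P n → x - d ∈ P n → d = 0 := by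
    intro d h1 h2
    have hseg : x ∈ openSegment ℝ (x - d) (x + d) := by
      refine ⟨1/2, 1/2, by norm_num, by norm_num, by norm_num, ?_⟩
      funext i
      simp only [Pi.add_apply, Pi.sub_apply, Pi.smul_apply, smul_eq_mul]
      ring
    have h := (hext _ h2 _ h1 hseg).2
    have h' : x + d = x + 0 := by rw [h, add_zero]
    exact add_left_cancel h'
  have hodd : ∀ s : Finset (Fin n), Odd s.card → 1 ≤ g x s := fun s hs =>
    hxP.2 _ (vtx_odd s hs)
  have hint : ∀ i, x i = 0 ∨ x i = 1 := by
    by_contra hcon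
    push_neg at hcon
    obtain ⟨i₀, hi₀0, hi₀1⟩ := hcon
    set F : Finset (Fin n) := Finset.univ.filter (fun i => x i ≠ 0 ∧ x i ≠ 1) with hF
    have hi₀F : i₀ ∈ F := by simp [hF, hi₀0, hi₀1]
    have hFfrac : ∀ i ∈ F, 0 < x i ∧ x i < 1 := by
      intro i hi
      simp only [hF, Finset.mem_filter] at hi
      have h := hcube i
      simp only [Set.mem_Icc] at h
      exact ⟨lt_of_le_of_ne h.1 (Ne.symm hi.2.1), lt_of_le_of_ne h.2 hi.2.2⟩
    have hFc : ∀ i, i ∉ F → x i = 0 ∨ x i = 1 := by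
      intro i hi
      by_contra h
      push_neg at h
      exact hi (by simp [hF, h.1, h.2])
    have habs_pos : ∀ i ∈ F, ∀ s : Finset (Fin n), 0 < |x i - vtx s i| := by
      intro i hi s
      have hf := hFfrac i hi
      rcases vtx01 s i with h | h <;> rw [h] <;> rw [abs_pos] <;>
        intro hc <;> [skip; skip] <;> nlinarith [hf.1, hf.2]
    have habs_lt : ∀ i ∈ F, ∀ s : Finset (Fin n), |x i - vtx s i| < 1 := by
      intro i hi s
      have hf := hFfrac i hi
      rcases vtx01 s i with h | h <;> rw [h, abs_lt] <;> constructor <;> linarith [hf.1, hf.2]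
    have L1 : ∀ s : Finset (Fin n), g x s = 1 →
        (∀ i, i ∉ F → x i = vtx s i) ∧ ∑ i ∈ F, |x i - vtx s i| = 1 := by
      intro s hs
      have hterm01 : ∀ i, i ∉ F → |x i - vtx s i| = 0 ∨ |x i - vtx s i| = 1 := by
        intro i hi
        rcases hFc i hi with h | h <;> rcases vtx01 s i with h' | h' <;>
          simp [h, h', abs_of_nonneg, abs_of_nonpos]
      have hsplit : ∑ i ∈ F, |x i - vtx s i| + ∑ i ∈ Fᶜ, |x i - vtx s i| = 1 := by
        rw [Finset.sum_add_sum_compl]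
        exact hs
      have hposF : 0 < ∑ i ∈ F, |x i - vtx s i| :=
        Finset.sum_pos' (fun i _ => abs_nonneg _) ⟨i₀, hi₀F, habs_pos i₀ hi₀F s⟩
      have hcompl0 : ∀ i ∈ Fᶜ, |x i - vtx s i| = 0 := by
        intro i hi
        rcases hterm01 i (Finset.mem_compl.mp hi) with h | h
        · exact h
        · exfalso
          have hle : |x i - vtx s i| ≤ ∑ j ∈ Fᶜ, |x j - vtx s j| :=
            Finset.single_le_sum (f := fun j => |x j - vtx s j|) (fun j _ => abs_nonneg _) hi
          rw [h] at hle
          linarith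
      constructor
      · intro i hi
        have h0 := hcompl0 i (Finset.mem_compl.mpr hi)
        rwa [abs_eq_zero, sub_eq_zero] at h0
      · have h0 : ∑ i ∈ Fᶜ, |x i - vtx s i| = 0 := Finset.sum_eq_zero hcompl0
        linarith
    have L2 : ∀ s₁ s₂ : Finset (Fin n), Odd s₁.card → Odd s₂.card →
        g x s₁ = 1 → g x s₂ = 1 →
        (∀ i ∈ F, (i ∈ s₁ ↔ i ∈ s₂)) ∨ (∀ i ∈ F, ¬(i ∈ s₁ ↔ i ∈ s₂)) := by
      intro s₁ s₂ ho₁ ho₂ h₁ h₂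
      have hoff : ∀ i, i ∉ F → (i ∈ s₁ ↔ i ∈ s₂) := by
        intro i hi
        have e1 := (L1 s₁ h₁).1 i hi
        have e2 := (L1 s₂ h₂).1 i hi
        have hv : vtx s₁ i = vtx s₂ i := e1 ▸ e2
        by_cases hm1 : i ∈ s₁ <;> by_cases hm2 : i ∈ s₂
        · exact iff_of_true hm1 hm2
        · exfalso; simp only [vtx, if_pos hm1, if_neg hm2] at hv; norm_num at hv
        · exfalso; simp only [vtx, if_neg hm1, if_pos hm2] at hv; norm_num at hv
        · exact iff_of_false hm1 hm2
      set D := F.filter (fun i => ¬(i ∈ s₁ ↔ i ∈ s₂)) with hD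
      set G := F.filter (fun i => (i ∈ s₁ ↔ i ∈ s₂)) with hG
      by_cases hDe : D = ∅
      · left
        intro i hi
        by_contra hni
        have hiD : i ∈ D := by rw [hD, Finset.mem_filter]; exact ⟨hi, hni⟩
        rw [hDe] at hiD
        exact absurd hiD (Finset.notMem_empty i)
      · right
        have hFsplit : ∑ i ∈ G, (|x i - vtx s₁ i| + |x i - vtx s₂ i|)
            + ∑ i ∈ D, (|x i - vtx s₁ i| + |x i - vtx s₂ i|) = 2 := by
          rw [hG, hD, Finset.sum_filter_add_sum_filter_not,
            Finset.sum_add_distrib, (L1 s₁ h₁).2, (L1 s₂ h₂).2]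
          norm_num
        have hDsum : ∑ i ∈ D, (|x i - vtx s₁ i| + |x i - vtx s₂ i|) = (D.card : ℝ) := by
          rw [Finset.sum_congr rfl (g := fun _ => (1 : ℝ)) (fun i hi => ?_),
            Finset.sum_const, nsmul_eq_mul, mul_one]
          rw [hD, Finset.mem_filter] at hi
          obtain ⟨hiF, hne⟩ := hi
          have hf := hFfrac i hiF
          by_cases hm1 : i ∈ s₁ <;> by_cases hm2 : i ∈ s₂
          · exact absurd (iff_of_true hm1 hm2) hne
          · simp only [vtx, if_pos hm1, if_neg hm2]
            rw [abs_of_nonpos (by linarith), abs_of_nonneg (by linarith)]; ring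
          · simp only [vtx, if_neg hm1, if_pos hm2]
            rw [abs_of_nonneg (by linarith), abs_of_nonpos (by linarith)]; ring
          · exact absurd (iff_of_false hm1 hm2) hne
        have hGsum : ∑ i ∈ G, (|x i - vtx s₁ i| + |x i - vtx s₂ i|)
            = 2 * ∑ i ∈ G, |x i - vtx s₁ i| := by
          rw [two_mul, ← Finset.sum_add_distrib]
          refine Finset.sum_congr rfl fun i hi => ?_
          rw [hG, Finset.mem_filter] at hi
          have hveq : vtx s₁ i = vtx s₂ i := by
            rcases hi with ⟨-, hiff⟩
            by_cases hm1 : i ∈ s₁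
            · simp [vtx, hm1, hiff.mp hm1]
            · have hm2 : i ∉ s₂ := fun h => hm1 (hiff.mpr h)
              simp [vtx, hm1, hm2]
          rw [hveq]
        -- parity of D.card
        have hpar : D.card % 2 = 0 := by
          set A₁ := s₁.filter (fun i => i ∈ F) with hA₁
          set A₂ := s₂.filter (fun i => i ∈ F) with hA₂
          have hb : s₁.filter (fun i => ¬ i ∈ F) = s₂.filter (fun i => ¬ i ∈ F) := by
            ext i
            simp only [Finset.mem_filter]
            constructor <;> rintro ⟨h1, h2⟩
            · exact ⟨(hoff i h2).mp h1, h2⟩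
            · exact ⟨(hoff i h2).mpr h1, h2⟩
          have hc1 : A₁.card + (s₁.filter (fun i => ¬ i ∈ F)).card = s₁.card :=
            Finset.card_filter_add_card_filter_not _
          have hc2 : A₂.card + (s₂.filter (fun i => ¬ i ∈ F)).card = s₂.card :=
            Finset.card_filter_add_card_filter_not _
          have hDeq : D = (A₁ ∪ A₂) \ (A₁ ∩ A₂) := by
            ext i
            rw [hD, hA₁, hA₂]
            simp only [Finset.mem_filter, Finset.mem_sdiff, Finset.mem_union, Finset.mem_inter]
            tauto
          have hsub : A₁ ∩ A₂ ⊆ A₁ ∪ A₂ :=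
            Finset.Subset.trans Finset.inter_subset_left Finset.subset_union_left
          have hcard1 : D.card = (A₁ ∪ A₂).card - (A₁ ∩ A₂).card := by
            rw [hDeq, Finset.card_sdiff_of_subset hsub]
          have hcard2 : (A₁ ∪ A₂).card + (A₁ ∩ A₂).card = A₁.card + A₂.card :=
            Finset.card_union_add_card_inter _ _
          have hle : (A₁ ∩ A₂).card ≤ (A₁ ∪ A₂).card := Finset.card_le_card hsub
          have hbcard : (s₁.filter (fun i => ¬ i ∈ F)).card = (s₂.filter (fun i => ¬ i ∈ F)).card := by
            rw [hb]
          rw [Nat.odd_iff] at ho₁ ho₂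
          omega
        -- G must be empty
        have hGe : G = ∅ := by
          by_contra hGne
          obtain ⟨j, hj⟩ := Finset.nonempty_of_ne_empty hGne
          have hjF : j ∈ F := by rw [hG, Finset.mem_filter] at hj; exact hj.1
          have hsum_pos : 0 < ∑ i ∈ G, |x i - vtx s₁ i| :=
            Finset.sum_pos' (fun i _ => abs_nonneg _) ⟨j, hj, habs_pos j hjF s₁⟩
          have hDlt : (D.card : ℝ) < 2 := by
            rw [← hDsum]
            rw [hGsum] at hFsplit
            linarith
          have hDlt' : D.card < 2 := by exact_mod_cast hDlt
          interval_cases hDc : D.card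
          · exact hDe (Finset.card_eq_zero.mp hDc)
          · omega
        intro i hi
        by_cases hiff : (i ∈ s₁ ↔ i ∈ s₂)
        · exfalso
          have hiG : i ∈ G := by rw [hG, Finset.mem_filter]; exact ⟨hi, hiff⟩
          rw [hGe] at hiG
          exact absurd hiG (Finset.notMem_empty i)
        · exact hiff
    by_cases hT : ∃ T : Finset (Fin n), Odd T.card ∧ g x T = 1
    · obtain ⟨T, hTodd, hTtight⟩ := hT
      have hjex : ∃ j ∈ F, j ≠ i₀ := by
        by_contra hcon
        push_neg at hcon
        have hFsing : F = {i₀} := Finset.eq_singleton_iff_unique_mem.mpr ⟨hi₀F, hcon⟩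
        have h1 := (L1 T hTtight).2
        rw [hFsing, Finset.sum_singleton] at h1
        exact absurd h1 (ne_of_lt (habs_lt i₀ hi₀F T))
      obtain ⟨j₀, hj₀F, hj₀ne⟩ := hjex
      set σ : ℝ := if (i₀ ∈ T ↔ j₀ ∈ T) then -1 else 1 with hσ
      have hσabs : |σ| = 1 := by rw [hσ]; split_ifs <;> norm_num
      set Snt := (Finset.univ : Finset (Finset (Fin n))).filter
        (fun s => Odd s.card ∧ g x s ≠ 1) with hSnt
      set δ : ℝ := if h : Snt.Nonempty then Snt.inf' h (fun s => (g x s - 1) / 2) else 1 with hδ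
      have hδpos : 0 < δ := by
        rw [hδ]
        split_ifs with h
        · rw [Finset.lt_inf'_iff]
          intro s hs
          rw [hSnt, Finset.mem_filter] at hs
          have hle := hodd s hs.2.1
          have hlt : 1 < g x s := lt_of_le_of_ne hle (Ne.symm hs.2.2)
          linarith
        · norm_num
      have hδle : ∀ s : Finset (Fin n), Odd s.card → g x s ≠ 1 → δ ≤ (g x s - 1) / 2 := by
        intro s h1 h2
        have hsm : s ∈ Snt := by
          rw [hSnt, Finset.mem_filter]
          exact ⟨Finset.mem_univ _, h1, h2⟩
        rw [hδ, dif_pos ⟨s, hsm⟩]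
        exact Finset.inf'_le _ hsm
      obtain ⟨hx0, hx1⟩ := hFfrac i₀ hi₀F
      obtain ⟨hy0, hy1⟩ := hFfrac j₀ hj₀F
      set ε := min δ (min (min (x i₀) (1 - x i₀)) (min (x j₀) (1 - x j₀))) with hε
      have hεpos : 0 < ε :=
        lt_min hδpos (lt_min (lt_min hx0 (by linarith)) (lt_min hy0 (by linarith)))
      have hεδ : ε ≤ δ := min_le_left _ _
      have hεx0 : ε ≤ x i₀ :=
        le_trans (min_le_right _ _) (le_trans (min_le_left _ _) (min_le_left _ _))
      have hεx1 : ε ≤ 1 - x i₀ :=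
        le_trans (min_le_right _ _) (le_trans (min_le_left _ _) (min_le_right _ _))
      have hεy0 : ε ≤ x j₀ :=
        le_trans (min_le_right _ _) (le_trans (min_le_right _ _) (min_le_left _ _))
      have hεy1 : ε ≤ 1 - x j₀ :=
        le_trans (min_le_right _ _) (le_trans (min_le_right _ _) (min_le_right _ _))
      set d : Fin n → ℝ := fun i => if i = i₀ then ε else if i = j₀ then σ * ε else 0 with hd
      have hmem : ∀ τ : ℝ, |τ| = 1 → x + τ • d ∈ P n := by
        intro τ hτ
        have habsτε : |τ * ε| = ε := by rw [abs_mul, hτ, abs_of_pos hεpos]; ring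
        have habsτσε : |τ * (σ * ε)| = ε := by
          rw [abs_mul, abs_mul, hτ, hσabs, abs_of_pos hεpos]; ring
        have hp1 : -ε ≤ τ * ε := by
          have h := neg_abs_le (τ * ε); rwa [habsτε] at h
        have hp2 : τ * ε ≤ ε := by
          have h := le_abs_self (τ * ε); rwa [habsτε] at h
        have hq1 : -ε ≤ τ * (σ * ε) := by
          have h := neg_abs_le (τ * (σ * ε)); rwa [habsτσε] at h
        have hq2 : τ * (σ * ε) ≤ ε := by
          have h := le_abs_self (τ * (σ * ε)); rwa [habsτσε] at h
        have hcube' : ∀ i, (x + τ • d) i ∈ Set.Icc (0:ℝ) 1 := by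
          intro i
          simp only [Pi.add_apply, Pi.smul_apply, smul_eq_mul, hd]
          by_cases hi : i = i₀
          · subst hi
            rw [if_pos rfl]
            constructor
            · linarith
            · linarith
          · by_cases hj : i = j₀
            · subst hj
              rw [if_neg hi, if_pos rfl]
              constructor
              · linarith
              · linarith
            · rw [if_neg hi, if_neg hj, mul_zero, add_zero]
              exact hcube i
        refine ⟨hcube', ?_⟩
        intro v hv
        obtain ⟨sv, rfl, hsodd⟩ := exists_rep v hv.1 hv.2
        have hmain := sum_abs_add x (τ • d) (vtx sv) (vtx01 sv) hcube
          (fun i => by have := hcube' i; simpa using this)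
        have hpert : ∑ i, (τ • d) i * (1 - 2 * vtx sv i)
            = τ * ε * (1 - 2 * vtx sv i₀) + τ * (σ * ε) * (1 - 2 * vtx sv j₀) := by
          have hsplit : ∀ i, (τ • d) i * (1 - 2 * vtx sv i)
              = (if i = i₀ then τ * ε * (1 - 2 * vtx sv i₀) else 0)
                + (if i = j₀ then τ * (σ * ε) * (1 - 2 * vtx sv j₀) else 0) := by
            intro i
            by_cases hi : i = i₀
            · subst hi
              rw [if_pos rfl, if_neg (Ne.symm hj₀ne)]
              simp only [Pi.smul_apply, smul_eq_mul, hd, if_pos rfl, if_true]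
              ring
            · by_cases hj : i = j₀
              · subst hj
                rw [if_neg hi, if_pos rfl]
                simp only [Pi.smul_apply, smul_eq_mul, hd, if_neg hi, if_pos rfl, if_true]
                ring
              · rw [if_neg hi, if_neg hj]
                simp only [Pi.smul_apply, smul_eq_mul, hd, if_neg hi, if_neg hj]
                ring
          rw [Finset.sum_congr rfl (fun i _ => hsplit i), Finset.sum_add_distrib,
            Finset.sum_ite_eq' Finset.univ i₀, Finset.sum_ite_eq' Finset.univ j₀]
          simp
        show (1:ℝ) ≤ ∑ i, |(x + τ • d) i - vtx sv i|
        have hconv : ∑ i, |(x + τ • d) i - vtx sv i| = ∑ i, |x i + (τ • d) i - vtx sv i| :=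
          Finset.sum_congr rfl fun i _ => by rw [Pi.add_apply]
        rw [hconv, hmain, hpert]
        have hgx : g x sv = ∑ i, |x i - vtx sv i| := rfl
        by_cases htight : g x sv = 1
        · have hzero : τ * ε * (1 - 2 * vtx sv i₀) + τ * (σ * ε) * (1 - 2 * vtx sv j₀) = 0 := by
            rcases L2 sv T hsodd hTodd htight hTtight with hbr | hbr
            · have hbi := hbr i₀ hi₀F
              have hbj := hbr j₀ hj₀F
              by_cases hiT : i₀ ∈ T <;> by_cases hjT : j₀ ∈ T
              · rw [hσ, if_pos (iff_of_true hiT hjT)]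
                simp only [vtx, if_pos (hbi.mpr hiT), if_pos (hbj.mpr hjT)]
                ring
              · rw [hσ, if_neg (fun h => hjT (h.mp hiT))]
                simp only [vtx, if_pos (hbi.mpr hiT), if_neg (fun h => hjT (hbj.mp h))]
                ring
              · rw [hσ, if_neg (fun h => hiT (h.mpr hjT))]
                simp only [vtx, if_neg (fun h => hiT (hbi.mp h)), if_pos (hbj.mpr hjT)]
                ring
              · rw [hσ, if_pos (iff_of_false hiT hjT)]
                simp only [vtx, if_neg (fun h => hiT (hbi.mp h)),
                  if_neg (fun h => hjT (hbj.mp h))]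
                ring
            · have hbi := hbr i₀ hi₀F
              have hbj := hbr j₀ hj₀F
              by_cases hiT : i₀ ∈ T <;> by_cases hjT : j₀ ∈ T
              · rw [hσ, if_pos (iff_of_true hiT hjT)]
                have h1 : i₀ ∉ sv := fun h => hbi (iff_of_true h hiT)
                have h2 : j₀ ∉ sv := fun h => hbj (iff_of_true h hjT)
                simp only [vtx, if_neg h1, if_neg h2]
                ring
              · rw [hσ, if_neg (fun h => hjT (h.mp hiT))]
                have h1 : i₀ ∉ sv := fun h => hbi (iff_of_true h hiT)
                have h2 : j₀ ∈ sv := by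
                  by_contra h
                  exact hbj (iff_of_false h hjT)
                simp only [vtx, if_neg h1, if_pos h2]
                ring
              · rw [hσ, if_neg (fun h => hiT (h.mpr hjT))]
                have h1 : i₀ ∈ sv := by
                  by_contra h
                  exact hbi (iff_of_false h hiT)
                have h2 : j₀ ∉ sv := fun h => hbj (iff_of_true h hjT)
                simp only [vtx, if_pos h1, if_neg h2]
                ring
              · rw [hσ, if_pos (iff_of_false hiT hjT)]
                have h1 : i₀ ∈ sv := by
                  by_contra h
                  exact hbi (iff_of_false h hiT)
                have h2 : j₀ ∈ sv := by
                  by_contra h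
                  exact hbj (iff_of_false h hjT)
                simp only [vtx, if_pos h1, if_pos h2]
                ring
          rw [hgx] at htight
          rw [htight]
          linarith [hzero]
        · have hgt : 1 < g x sv := lt_of_le_of_ne (hodd sv hsodd) (Ne.symm htight)
          have hb := hδle sv hsodd htight
          have habs1 : |1 - 2 * vtx sv i₀| = 1 := by
            rcases vtx01 sv i₀ with h | h <;> rw [h] <;> norm_num
          have habs2 : |1 - 2 * vtx sv j₀| = 1 := by
            rcases vtx01 sv j₀ with h | h <;> rw [h] <;> norm_num
          have ht1 : -ε ≤ τ * ε * (1 - 2 * vtx sv i₀) := by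
            have h := neg_abs_le (τ * ε * (1 - 2 * vtx sv i₀))
            rwa [abs_mul, habsτε, habs1, mul_one] at h
          have ht2 : -ε ≤ τ * (σ * ε) * (1 - 2 * vtx sv j₀) := by
            have h := neg_abs_le (τ * (σ * ε) * (1 - 2 * vtx sv j₀))
            rwa [abs_mul, habsτσε, habs2, mul_one] at h
          rw [hgx] at hgt hb
          linarith
      have h1 : x + d ∈ P n := by
        have h := hmem 1 (by norm_num)
        rwa [one_smul] at h
      have h2 : x - d ∈ P n := by
        have h := hmem (-1) (by norm_num)
        rwa [neg_smul, one_smul, ← sub_eq_add_neg] at h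
      have hd0 := key d h1 h2
      have hdi : d i₀ = 0 := congrFun hd0 i₀
      rw [hd] at hdi
      simp only [if_pos rfl] at hdi
      exact absurd hdi (ne_of_gt hεpos)
    · push_neg at hT
      have hgt : ∀ s : Finset (Fin n), Odd s.card → 1 < g x s := fun s hs =>
        lt_of_le_of_ne (hodd s hs) (Ne.symm (hT s hs))
      have hSne : ((Finset.univ : Finset (Finset (Fin n))).filter
          (fun s => Odd (s.card))).Nonempty := by
        refine ⟨{i₀}, ?_⟩
        rw [Finset.mem_filter]
        refine ⟨Finset.mem_univ _, ?_⟩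
        rw [Finset.card_singleton]
        exact odd_one
      set δ := ((Finset.univ : Finset (Finset (Fin n))).filter
        (fun s => Odd (s.card))).inf' hSne (fun s => g x s - 1) with hδ
      have hδpos : 0 < δ := by
        rw [hδ, Finset.lt_inf'_iff]
        intro s hs
        rw [Finset.mem_filter] at hs
        linarith [hgt s hs.2]
      have hδle : ∀ s : Finset (Fin n), Odd s.card → δ ≤ g x s - 1 := by
        intro s hs
        rw [hδ]
        exact Finset.inf'_le (f := fun s : Finset (Fin n) => g x s - 1)
          (Finset.mem_filter.mpr ⟨Finset.mem_univ s, hs⟩)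
      obtain ⟨hx0, hx1⟩ := hFfrac i₀ hi₀F
      set ε := min δ (min (x i₀) (1 - x i₀)) with hε
      have hεpos : 0 < ε := lt_min hδpos (lt_min hx0 (by linarith))
      have hεδ : ε ≤ δ := min_le_left _ _
      have hεx0 : ε ≤ x i₀ := le_trans (min_le_right _ _) (min_le_left _ _)
      have hεx1 : ε ≤ 1 - x i₀ := le_trans (min_le_right _ _) (min_le_right _ _)
      set d : Fin n → ℝ := fun i => if i = i₀ then ε else 0 with hd
      have hmem : ∀ τ : ℝ, |τ| = 1 → x + τ • d ∈ P n := by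
        intro τ hτ
        have habsτε : |τ * ε| = ε := by rw [abs_mul, hτ, abs_of_pos hεpos]; ring
        have hp1 : -ε ≤ τ * ε := by
          have h := neg_abs_le (τ * ε); rwa [habsτε] at h
        have hp2 : τ * ε ≤ ε := by
          have h := le_abs_self (τ * ε); rwa [habsτε] at h
        have hcube' : ∀ i, (x + τ • d) i ∈ Set.Icc (0:ℝ) 1 := by
          intro i
          simp only [Pi.add_apply, Pi.smul_apply, smul_eq_mul, hd]
          by_cases hi : i = i₀
          · subst hi
            rw [if_pos rfl]
            constructor
            · linarith
            · linarith
          · rw [if_neg hi, mul_zero, add_zero]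
            exact hcube i
        refine ⟨hcube', ?_⟩
        intro v hv
        obtain ⟨sv, rfl, hsodd⟩ := exists_rep v hv.1 hv.2
        have hmain := sum_abs_add x (τ • d) (vtx sv) (vtx01 sv) hcube
          (fun i => by have := hcube' i; simpa using this)
        have hpert : ∑ i, (τ • d) i * (1 - 2 * vtx sv i) = τ * ε * (1 - 2 * vtx sv i₀) := by
          have hsplit : ∀ i, (τ • d) i * (1 - 2 * vtx sv i)
              = (if i = i₀ then τ * ε * (1 - 2 * vtx sv i₀) else 0) := by
            intro i
            by_cases hi : i = i₀
            · subst hi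
              rw [if_pos rfl]
              simp only [Pi.smul_apply, smul_eq_mul, hd, if_pos rfl, if_true]
              try ring
            · rw [if_neg hi]
              simp only [Pi.smul_apply, smul_eq_mul, hd, if_neg hi]
              ring
          rw [Finset.sum_congr rfl (fun i _ => hsplit i),
            Finset.sum_ite_eq' Finset.univ i₀]
          simp
        show (1:ℝ) ≤ ∑ i, |(x + τ • d) i - vtx sv i|
        have hconv : ∑ i, |(x + τ • d) i - vtx sv i| = ∑ i, |x i + (τ • d) i - vtx sv i| :=
          Finset.sum_congr rfl fun i _ => by rw [Pi.add_apply]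
        rw [hconv, hmain, hpert]
        have hgx : g x sv = ∑ i, |x i - vtx sv i| := rfl
        have hb := hδle sv hsodd
        rw [hgx] at hb
        have habs1 : |1 - 2 * vtx sv i₀| = 1 := by
          rcases vtx01 sv i₀ with h | h <;> rw [h] <;> norm_num
        have ht1 : -ε ≤ τ * ε * (1 - 2 * vtx sv i₀) := by
          have h := neg_abs_le (τ * ε * (1 - 2 * vtx sv i₀))
          rwa [abs_mul, habsτε, habs1, mul_one] at h
        linarith
      have h1 : x + d ∈ P n := by
        have h := hmem 1 (by norm_num)
        rwa [one_smul] at h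
      have h2 : x - d ∈ P n := by
        have h := hmem (-1) (by norm_num)
        rwa [neg_smul, one_smul, ← sub_eq_add_neg] at h
      have hd0 := key d h1 h2
      have hdi : d i₀ = 0 := congrFun hd0 i₀
      rw [hd] at hdi
      simp only [if_pos rfl] at hdi
      exact absurd hdi (ne_of_gt hεpos)
  -- parity of the integral point
  set c := (Finset.univ.filter (fun i => x i = 1)).card with hc
  have hsum : ∑ i, x i = (c : ℝ) := by
    have h1 : ∀ i, x i = if x i = 1 then (1 : ℝ) else 0 := by
      intro i; rcases hint i with h | h <;> simp [h]
    calc ∑ i, x i = ∑ i, if x i = 1 then (1 : ℝ) else 0 :=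
          Finset.sum_congr rfl fun i _ => h1 i
      _ = _ := by rw [Finset.sum_boole, hc]
  rcases Nat.even_or_odd c with he | ho
  · obtain ⟨m, hm⟩ := he
    exact ⟨hint, ⟨m, by rw [hsum, hm]; push_cast; ring⟩⟩
  · exfalso
    obtain ⟨m, hm⟩ := ho
    have h0 := hxP.2 x ⟨hint, ⟨m, by rw [hsum, hm]; push_cast; ring⟩⟩
    simp only [sub_self, abs_zero, Finset.sum_const_zero] at h0
    linarith

lemma finite_Ev : (Ev n).Finite := by
  have h : Ev n ⊆ Set.pi Set.univ (fun _ : Fin n => ({0, 1} : Set ℝ)) := by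
    rintro v ⟨hv, -⟩
    simp only [Set.mem_pi, Set.mem_univ, forall_true_left]
    intro i
    rcases hv i with h | h <;> simp [h]
  exact Set.Finite.subset (Set.Finite.pi fun _ => (Set.finite_singleton (1:ℝ)).insert 0) h

end DemicubeAux

open DemicubeAux in
/-- The `n`-demicube, i.e. the convex hull of the even vertices of the unit `n`-cube, equals the
set of points of the cube whose `ℓ¹`-distance to every odd vertex is at least `1`. -/
theorem demicube_eq_dist_ge_one (n : ℕ) :
    convexHull ℝ {v : Fin n → ℝ |
        (∀ i, v i = 0 ∨ v i = 1) ∧ ∃ k : ℤ, ∑ i, v i = 2 * (k : ℝ)} =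
      {x : Fin n → ℝ | (∀ i, x i ∈ Set.Icc (0 : ℝ) 1) ∧
        ∀ v : Fin n → ℝ,
          ((∀ i, v i = 0 ∨ v i = 1) ∧ ∃ k : ℤ, ∑ i, v i = 2 * (k : ℝ) + 1) →
          1 ≤ ∑ i, |x i - v i|} := by
  show convexHull ℝ (Ev n) = P n
  refine Set.Subset.antisymm (convexHull_min Ev_subset_P convex_P) ?_
  have h1 : closure (convexHull ℝ ((P n).extremePoints ℝ)) = P n :=
    closure_convexHull_extremePoints isCompact_P convex_P
  calc P n = closure (convexHull ℝ ((P n).extremePoints ℝ)) := h1.symm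
    _ ⊆ closure (convexHull ℝ (Ev n)) :=
        closure_mono (convexHull_mono extremePoints_subset_Ev)
    _ = convexHull ℝ (Ev n) := (finite_Ev.isClosed_convexHull ℝ).closure_eq
end

section
/- Let l = (l₁, …, l_n) ∈ [0,1]ⁿ satisfy l₁ ≥ l₂ ≥ … ≥ l_n and l₁ + l₂ ≤ 1. Then the ℓ¹-distance from l to the set V_odd of odd vertices of the unit n-cube equals (1 − l₁) + l₂ + … + l_n, and it is achieved at the vertex e₁ = (1, 0, …, 0). -/
open Finset

/-- For `l ∈ [0,1]ⁿ` with `l₁ ≥ l₂ ≥ … ≥ l_n` and `l₁ + l₂ ≤ 1`, the `ℓ¹`-distance from `l`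
to the set of odd vertices of the unit cube equals `(1 − l₁) + l₂ + … + l_n`, and it is
achieved at the vertex `e₁ = (1,0,…,0)`. -/
theorem dist_to_odd_vertices (n : ℕ) (hn : 2 ≤ n) (l : Fin n → ℝ)
    (hl : ∀ i, l i ∈ Set.Icc (0 : ℝ) 1)
    (hmono : ∀ i j : Fin n, i ≤ j → l j ≤ l i)
    (hsum : l ⟨0, by omega⟩ + l ⟨1, by omega⟩ ≤ 1) :
    IsLeast {d : ℝ | ∃ v : Fin n → ℝ,
        ((∀ i, v i = 0 ∨ v i = 1) ∧ ∃ k : ℤ, ∑ i, v i = 2 * (k : ℝ) + 1) ∧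
        d = ∑ i, |l i - v i|}
      ((1 - l ⟨0, by omega⟩) + ∑ i ∈ univ.erase (⟨0, by omega⟩ : Fin n), l i) ∧
    (∑ i, |l i - (if i = (⟨0, by omega⟩ : Fin n) then (1 : ℝ) else 0)|)
      = (1 - l ⟨0, by omega⟩) + ∑ i ∈ univ.erase (⟨0, by omega⟩ : Fin n), l i := by
  set z : Fin n := ⟨0, by omega⟩ with hz
  set o : Fin n := ⟨1, by omega⟩ with ho
  -- the equality part
  have heq : (∑ i, |l i - (if i = z then (1 : ℝ) else 0)|)
      = (1 - l z) + ∑ i ∈ univ.erase z, l i := by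
    rw [← Finset.add_sum_erase univ _ (mem_univ z)]
    congr 1
    · rw [if_pos rfl, abs_of_nonpos (by linarith [(hl z).2]), neg_sub]
    · refine Finset.sum_congr rfl fun i hi => ?_
      rw [if_neg (Finset.ne_of_mem_erase hi), sub_zero, abs_of_nonneg (hl i).1]
  refine ⟨⟨⟨fun i => if i = z then (1 : ℝ) else 0, ⟨fun i => by by_cases h : i = z <;> simp [h],
      0, by simp [Finset.sum_ite_eq']⟩, heq.symm⟩, ?_⟩, heq⟩
  -- lower bound
  rintro d ⟨v, ⟨hv01, k, hk⟩, rfl⟩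
  classical
  set S : Finset (Fin n) := univ.filter (fun i => v i = 1) with hS
  have hvS : ∀ i, i ∈ S ↔ v i = 1 := by intro i; simp [hS]
  have hv0 : ∀ i, i ∉ S → v i = 0 := fun i hi => (hv01 i).resolve_right (by
    rw [← hvS i]; exact hi)
  have hsumv : ∑ i, v i = (S.card : ℝ) := by
    rw [← Finset.sum_filter_add_sum_filter_not univ (fun i => v i = 1) v]
    rw [Finset.sum_congr rfl (fun i hi => (hvS i).1 (by simpa [hS] using hi)),
      Finset.sum_eq_zero (fun i hi => hv0 i (by simpa [hS] using hi))]
    simp [hS, Finset.sum_const]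
  have hSne : S.Nonempty := by
    rcases S.eq_empty_or_nonempty with h | h
    · exfalso
      rw [hsumv, h] at hk
      simp only [Finset.card_empty, Nat.cast_zero] at hk
      have : (2 * k + 1 : ℤ) = 0 := by exact_mod_cast hk.symm
      omega
    · exact h
  -- rewrite the distance
  have hdist : ∑ i, |l i - v i| = ∑ i ∈ S, (1 - l i) + ∑ i ∈ univ \ S, l i := by
    rw [← Finset.sum_filter_add_sum_filter_not univ (fun i => v i = 1) (fun i => |l i - v i|)]
    congr 1
    · refine Finset.sum_congr rfl fun i hi => ?_
      rw [(hvS i).1 (by simpa [hS] using hi), abs_of_nonpos (by linarith [(hl i).2]), neg_sub]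
    · refine Finset.sum_congr (by simp [hS, Finset.sdiff_eq_filter]) fun i hi => ?_
      rw [hv0 i (by simpa [hS] using hi), sub_zero, abs_of_nonneg (hl i).1]
  -- key estimate : 2 * ∑_{i ∈ S} l i ≤ S.card - 1 + 2 * l z
  set j : Fin n := S.min' hSne with hj
  have hjS : j ∈ S := S.min'_mem hSne
  have hjz : l j ≤ l z := hmono z j (by simp [hz, Fin.le_def])
  have herase : ∀ i ∈ S.erase j, l i ≤ l o := by
    intro i hi
    refine hmono o i ?_
    have h1 : j ≤ i := S.min'_le i (Finset.mem_of_mem_erase hi)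
    have h2 : i ≠ j := Finset.ne_of_mem_erase hi
    rw [Fin.le_def] at h1 ⊢
    rw [Fin.ne_iff_vne] at h2
    simp only [ho]
    omega
  have hcard : 1 ≤ S.card := Finset.card_pos.mpr hSne
  have hol : l o ≤ l z := hmono z o (by simp [hz, ho, Fin.le_def])
  have h2lo : 2 * l o ≤ 1 := by linarith
  have hSsum : ∑ i ∈ S, l i = l j + ∑ i ∈ S.erase j, l i :=
    (Finset.add_sum_erase S l hjS).symm
  have hEsum : ∑ i ∈ S.erase j, l i ≤ (S.card - 1 : ℕ) * l o := by
    have := Finset.sum_le_card_nsmul (S.erase j) l (l o) herase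
    rwa [Finset.card_erase_of_mem hjS, nsmul_eq_mul] at this
  have hkey : 2 * ∑ i ∈ S, l i ≤ (S.card : ℝ) - 1 + 2 * l z := by
    have hcast : ((S.card - 1 : ℕ) : ℝ) = (S.card : ℝ) - 1 := by
      push_cast [hcard]; ring
    have h1 : ((S.card - 1 : ℕ) : ℝ) * (2 * l o) ≤ ((S.card - 1 : ℕ) : ℝ) * 1 := by
      apply mul_le_mul_of_nonneg_left h2lo (by positivity)
    nlinarith [hEsum, (hl o).1]
  -- final arithmetic
  have hzsum : ∑ i ∈ univ.erase z, l i = ∑ i, l i - l z :=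
    Finset.sum_erase_eq_sub (mem_univ z)
  have hsplit : ∑ i ∈ S, (1 - l i) + ∑ i ∈ univ \ S, l i
      = (S.card : ℝ) - 2 * ∑ i ∈ S, l i + ∑ i, l i := by
    rw [Finset.sum_sub_distrib, Finset.sum_const, Finset.sum_sdiff_eq_sub (Finset.subset_univ S)]
    simp only [nsmul_eq_mul, mul_one]
    ring
  rw [hdist, hsplit, hzsum]
  linarith
end
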